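/- For a CW object V• in a cocomplete pointed category with CW basis (V̄_n), the n-th latching object decomposes as L_n V• ≅ ⨿_{0 ≤ k < n} ⨿_{0 ≤ i_1 < … < i_{n−k−1} ≤ n−1} V̄_k, where the summand indexed by (i_1,…,i_{n−k−1}) includes into V_n via the iterated degeneracy s_{i_{n−k−1}} … s_{i_2} s_{i_1} restricted to V̄_k. -/

import Mathlib

open CategoryTheory CategoryTheory.Limits Simplicial Opposite

namespace Stmt4

variable {M : Type*} [Category M] [HasZeroObject M] [HasZeroMorphisms M] [HasColimits M]

/-- The indexing category for the `n`-th latching object: surjections `[n] ↠ [k]` with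
`k < n` (as a full subcategory of the under category), made opposite since simplicial
objects are contravariant. -/
def LatchIndex (n : ℕ) : Type _ :=
  (ObjectProperty.FullSubcategory fun f : Under (⦋n⦌ : SimplexCategory) =>
    Epi f.hom ∧ f.right.len < n)ᵒᵖ

instance (n : ℕ) : Category (LatchIndex n) := by
  dsimp [LatchIndex]; infer_instance

/-- The diagram whose colimit is the `n`-th latching object. -/
def latchDiagram (V : CategoryTheory.SimplicialObject M) (n : ℕ) : LatchIndex n ⥤ M :=
  ((ObjectProperty.ι _ ⋙ Under.forget (⦋n⦌ : SimplexCategory)).op ⋙ V :)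

/-- The `n`-th latching object `L_n V = colim_{[n]↠[k], k<n} V_k`. -/
noncomputable def latching (V : CategoryTheory.SimplicialObject M) (n : ℕ) : M :=
  colimit (latchDiagram V n)

/-- The canonical map `L_n V → V_n`, with components the degeneracies `V.map θ.op`. -/
noncomputable def latchCanon (V : CategoryTheory.SimplicialObject M) (n : ℕ) :
    latching V n ⟶ V _⦋n⦌ :=
  colimit.desc (latchDiagram V n)
    { pt := V _⦋n⦌
      ι :=
        { app := fun A => V.map (A.unop.obj.hom).op
          naturality := by
            intro A B f
            dsimp [latchDiagram]
            rw [Category.comp_id]; erw [← V.map_comp]; exact congrArg V.map (congrArg Quiver.Hom.op (Under.w f.unop.hom)) } }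

/-- Indexing type for the coproduct decomposition of the latching object: pairs of a
`k < n` and a surjection `θ : [n] ↠ [k]` (equivalently, by the unique expression of a
surjection in `Δ` as a composite of codegeneracies with decreasing indices, tuples
`0 ≤ i_1 < … < i_{n-k-1} ≤ n-1`). -/
def DecompIndex (n : ℕ) : Type _ :=
  Σ k : Fin n, { θ : (⦋n⦌ : SimplexCategory) ⟶ ⦋(k : ℕ)⦌ // Epi θ }

/-- The object of `LatchIndex n` associated to an element of `DecompIndex n`. -/
def toLatchIndex {n : ℕ} (p : DecompIndex n) : LatchIndex n :=
  op ⟨Under.mk p.2.1, ⟨by simpa using p.2.2, by simpa using p.1.2⟩⟩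

/-- The canonical comparison map `⨿_{k<n} ⨿_{[n]↠[k]} V̄_k → L_n V`, whose component at
`(k, θ)` is the basis inclusion `ι_k : V̄_k → V_k` followed by the colimit leg; composed
with `L_n V → V_n` it is the iterated degeneracy `V.map θ.op` restricted to the basis. -/
noncomputable def decompMap (V : CategoryTheory.SimplicialObject M)
    (Vbar : ℕ → M) (ι : ∀ m : ℕ, Vbar m ⟶ V _⦋m⦌) (n : ℕ) :
    (∐ fun p : DecompIndex n => Vbar (p.1 : ℕ)) ⟶ latching V n :=
  Sigma.desc fun p => ι (p.1 : ℕ) ≫ colimit.ι (latchDiagram V n) (toLatchIndex p)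

/-! ### Auxiliary definitions and lemmas for the proof -/

/-- The dimension of the target of the surjection indexed by an object of `LatchIndex n`. -/
@[reducible] def objLen {n : ℕ} (A : LatchIndex n) : ℕ := A.unop.obj.right.len

/-- The surjection indexed by an object of `LatchIndex n`. -/
@[reducible] def objHom {n : ℕ} (A : LatchIndex n) : (⦋n⦌ : SimplexCategory) ⟶ ⦋objLen A⦌ :=
  A.unop.obj.hom

instance {n : ℕ} (A : LatchIndex n) : Epi (objHom A) := A.unop.property.1

lemma objLen_lt {n : ℕ} (A : LatchIndex n) : objLen A < n := A.unop.property.2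

/-- Composing a surjection indexed by `A : LatchIndex n` with a further surjection (or
taking it as is) yields an element of `DecompIndex n`. -/
@[reducible] def push {n : ℕ} (A : LatchIndex n) : Option (DecompIndex (objLen A)) → DecompIndex n := fun o => match o with
  | none => ⟨⟨objLen A, objLen_lt A⟩, ⟨objHom A, inferInstance⟩⟩
  | some p => ⟨⟨(p.1 : ℕ), lt_trans p.1.2 (objLen_lt A)⟩,
      ⟨objHom A ≫ p.2.1, @epi_comp _ _ _ _ _ _ inferInstance _ p.2.2⟩⟩

lemma toLatchIndex_push_none {n : ℕ} (A : LatchIndex n) : toLatchIndex (push A none) = A := by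
  obtain ⟨⟨⟨⟨⟨⟩⟩, R, f⟩, hf⟩⟩ := A
  rfl

/-- The morphism of `LatchIndex n` witnessing the factorization `θ ≫ σ` of a composed
surjection through `θ`. -/
def pushHom {n : ℕ} (A : LatchIndex n) (p : DecompIndex (objLen A)) :
    toLatchIndex (push A (some p)) ⟶ A :=
  (show A.unop ⟶ (toLatchIndex (push A (some p))).unop from ObjectProperty.homMk (Under.homMk p.2.1 rfl)).op

section Aux

variable (V : CategoryTheory.SimplicialObject M) (Vbar : ℕ → M) (ι : ∀ m : ℕ, Vbar m ⟶ V _⦋m⦌)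

lemma map_comp_ι {n : ℕ} (A : LatchIndex n) (p : DecompIndex (objLen A)) :
    V.map p.2.1.op ≫ colimit.ι (latchDiagram V n) A
      = colimit.ι (latchDiagram V n) (toLatchIndex (push A (some p))) :=
  colimit.w (latchDiagram V n) (pushHom A p)

/-- Summands of the full splitting of `V _⦋m⦌`: one copy of `V̄_m` (index `none`) and one
copy of `V̄_k` for each surjection `[m] ↠ [k]` with `k < m`. -/
@[reducible] def sObj (m : ℕ) : Option (DecompIndex m) → M := fun o => match o with
  | none => Vbar m
  | some p => Vbar (p.1 : ℕ)

/-- The inclusions of the summands of the full splitting of `V _⦋m⦌`. -/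
@[reducible] def sLeg (m : ℕ) : ∀ o : Option (DecompIndex m), sObj Vbar m o ⟶ V _⦋m⦌ := fun o => match o with
  | none => ι m
  | some p => ι (p.1 : ℕ) ≫ V.map p.2.1.op

/-- The cofan expressing the latching object as a coproduct. -/
noncomputable def latchCofan (n : ℕ) : Cofan (fun p : DecompIndex n => Vbar (p.1 : ℕ)) :=
  Cofan.mk (latching V n) fun p => ι (p.1 : ℕ) ≫ colimit.ι (latchDiagram V n) (toLatchIndex p)

/-- The cofan expressing `V _⦋m⦌` as a coproduct of basis objects. -/
noncomputable def splitCofan (m : ℕ) : Cofan (sObj Vbar m) :=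
  Cofan.mk (V _⦋m⦌) (sLeg V Vbar ι m)

lemma ι_latchCanon (n : ℕ) (A : LatchIndex n) :
    colimit.ι (latchDiagram V n) A ≫ latchCanon V n = V.map (A.unop.obj.hom).op := by
  simp [latchCanon]; rfl

/-- If `V _⦋m⦌ = V̄_m ⨿ L_m V` and `L_m V` decomposes as a coproduct of basis objects, then
`V _⦋m⦌` decomposes as a coproduct of basis objects. -/
noncomputable def splitIsColimit (m : ℕ)
    (hb : IsColimit (BinaryCofan.mk (ι m) (latchCanon V m)))
    (hl : IsColimit (latchCofan V Vbar ι m)) : IsColimit (splitCofan V Vbar ι m) := by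
  refine mkCofanColimit _
    (fun s => hb.desc (BinaryCofan.mk (s.inj none)
      (hl.desc (Cofan.mk s.pt fun p => s.inj (some p))))) ?_ ?_
  · intro s o
    have hL : ι m ≫ hb.desc (BinaryCofan.mk (s.inj none)
        (hl.desc (Cofan.mk s.pt fun p => s.inj (some p)))) = s.inj none := by
      exact hb.fac (BinaryCofan.mk (s.inj none)
        (hl.desc (Cofan.mk s.pt fun p => s.inj (some p)))) ⟨WalkingPair.left⟩
    have hR : latchCanon V m ≫ hb.desc (BinaryCofan.mk (s.inj none)
        (hl.desc (Cofan.mk s.pt fun p => s.inj (some p))))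
        = hl.desc (Cofan.mk s.pt fun p => s.inj (some p)) := by
      exact hb.fac (BinaryCofan.mk (s.inj none)
        (hl.desc (Cofan.mk s.pt fun p => s.inj (some p)))) ⟨WalkingPair.right⟩
    obtain (_ | p) := o
    · exact hL
    · show (ι (p.1 : ℕ) ≫ V.map p.2.1.op) ≫ _ = _
      rw [show (V.map (p.2.1).op : _ ⟶ _)
            = colimit.ι (latchDiagram V m) (toLatchIndex p) ≫ latchCanon V m
          from (ι_latchCanon V m (toLatchIndex p)).symm]
      erw [Category.assoc, Category.assoc, hR]
      have h := hl.fac (Cofan.mk s.pt fun p => s.inj (some p)) ⟨p⟩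
      simp only [latchCofan, Cofan.mk_pt, Cofan.mk_ι_app, Category.assoc] at h
      exact (Category.assoc _ _ _).symm.trans h
  · intro s g hg
    apply BinaryCofan.IsColimit.hom_ext hb
    · exact (hg none).trans ((hb.fac (BinaryCofan.mk (s.inj none)
          (hl.desc (Cofan.mk s.pt fun p => s.inj (some p)))) ⟨WalkingPair.left⟩).symm)
    · apply Cofan.IsColimit.hom_ext hl
      intro p
      have hR : latchCanon V m ≫ hb.desc (BinaryCofan.mk (s.inj none)
          (hl.desc (Cofan.mk s.pt fun p => s.inj (some p))))
          = hl.desc (Cofan.mk s.pt fun p => s.inj (some p)) := by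
        exact hb.fac (BinaryCofan.mk (s.inj none)
          (hl.desc (Cofan.mk s.pt fun p => s.inj (some p)))) ⟨WalkingPair.right⟩
      have h1 := hl.fac (Cofan.mk s.pt fun p => s.inj (some p)) ⟨p⟩
      simp only [latchCofan, Cofan.mk_pt, Cofan.mk_ι_app, Category.assoc] at h1
      have h2 := hg (some p)
      simp only [splitCofan, sLeg, cofan_mk_inj, Category.assoc] at h2
      simp only [latchCofan, cofan_mk_inj, BinaryCofan.mk_inr, Category.assoc]
      erw [hR, h1, Category.assoc]
      erw [show colimit.ι (latchDiagram V m) (toLatchIndex p) ≫ latchCanon V m ≫ g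
            = V.map p.2.1.op ≫ g from by
          erw [← Category.assoc, ι_latchCanon V m (toLatchIndex p)]; rfl]
      exact (Category.assoc _ _ _).symm.trans h2

lemma sinj_congr {n : ℕ} (s : Cofan (fun p : DecompIndex n => Vbar (p.1 : ℕ))) (k : Fin n)
    {θ θ' : (⦋n⦌ : SimplexCategory) ⟶ ⦋(k : ℕ)⦌} (h : θ = θ') (hθ : Epi θ) (hθ' : Epi θ') :
    s.inj ⟨k, ⟨θ, hθ⟩⟩ = s.inj ⟨k, ⟨θ', hθ'⟩⟩ := by subst h; rfl

variable {n : ℕ}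

/-- The legs of the auxiliary cofan used to define the descent map. -/
@[reducible] def descLegs (s : Cofan (fun p : DecompIndex n => Vbar (p.1 : ℕ))) (A : LatchIndex n) :
    ∀ o : Option (DecompIndex (objLen A)), sObj Vbar (objLen A) o ⟶ s.pt := fun o => match o with
  | none => s.inj (push A none)
  | some p => s.inj (push A (some p))

variable (hQ : ∀ m, m < n → IsColimit (splitCofan V Vbar ι m))

noncomputable def descFun (s : Cofan (fun p : DecompIndex n => Vbar (p.1 : ℕ)))
    (A : LatchIndex n) : (latchDiagram V n).obj A ⟶ s.pt :=
  (hQ (objLen A) (objLen_lt A)).desc (Cofan.mk s.pt (descLegs Vbar s A))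

lemma descFun_fac (s : Cofan (fun p : DecompIndex n => Vbar (p.1 : ℕ))) (A : LatchIndex n)
    (o : Option (DecompIndex (objLen A))) :
    sLeg V Vbar ι (objLen A) o ≫ descFun V Vbar ι hQ s A = descLegs Vbar s A o := by
  have h := (hQ (objLen A) (objLen_lt A)).fac (Cofan.mk s.pt (descLegs Vbar s A)) ⟨o⟩
  simpa [splitCofan, cofan_mk_inj, descFun] using h

lemma leg_descFun (s : Cofan (fun p : DecompIndex n => Vbar (p.1 : ℕ))) (A : LatchIndex n)
    (j : ℕ) (hj : j ≤ objLen A) (τ : (⦋objLen A⦌ : SimplexCategory) ⟶ ⦋j⦌) (hτ : Epi τ) :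
    ι j ≫ V.map τ.op ≫ descFun V Vbar ι hQ s A
      = s.inj ⟨⟨j, lt_of_le_of_lt hj (objLen_lt A)⟩,
          ⟨objHom A ≫ τ, @epi_comp _ _ _ _ _ _ inferInstance _ hτ⟩⟩ := by
  rcases lt_or_eq_of_le hj with h | rfl
  · have hfac := descFun_fac V Vbar ι hQ s A (some ⟨⟨j, h⟩, ⟨τ, hτ⟩⟩)
    simp only [sLeg, descLegs, Category.assoc] at hfac
    exact (Category.assoc _ _ _).symm.trans hfac
  · have hid : τ = 𝟙 _ := by haveI := hτ; exact SimplexCategory.eq_id_of_epi τ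
    subst hid
    have hfac := descFun_fac V Vbar ι hQ s A none
    simp only [sLeg, descLegs] at hfac
    simp only [op_id, CategoryTheory.Functor.map_id, Category.id_comp]
    erw [Category.id_comp]
    exact hfac.trans (sinj_congr Vbar s _ (Category.comp_id (objHom A)).symm _ _)

/-- The cocone on the latching diagram built from a cofan on the decomposition index. -/
noncomputable def descCocone (s : Cofan (fun p : DecompIndex n => Vbar (p.1 : ℕ))) :
    Cocone (latchDiagram V n) where
  pt := s.pt
  ι :=
    { app := fun A => descFun V Vbar ι hQ s A
      naturality := by
        intro A B f
        set u : (⦋objLen B⦌ : SimplexCategory) ⟶ ⦋objLen A⦌ := f.unop.hom.right with hu_def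
        have hw : objHom B ≫ u = objHom A := Under.w f.unop.hom
        have hu : Epi u := by
          have : Epi (objHom B ≫ u) := by rw [hw]; infer_instance
          exact epi_of_epi (objHom B) u
        have hle : objLen A ≤ objLen B := @SimplexCategory.len_le_of_epi _ _ u hu
        have key : V.map u.op ≫ descFun V Vbar ι hQ s B = descFun V Vbar ι hQ s A := by
          apply Cofan.IsColimit.hom_ext (hQ (objLen A) (objLen_lt A))
          rintro (_ | p)
          · have h1 := leg_descFun V Vbar ι hQ s B (objLen A) hle u hu
            have h2 := descFun_fac V Vbar ι hQ s A none
            simp only [splitCofan, cofan_mk_inj, sLeg, descLegs, Category.assoc] at h2 ⊢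
            rw [h1, h2]
            exact sinj_congr Vbar s _ hw _ _
          · have hj : (p.1 : ℕ) ≤ objLen B := le_trans (le_of_lt p.1.2) hle
            have h1 := leg_descFun V Vbar ι hQ s B (p.1 : ℕ) hj (u ≫ p.2.1)
              (@epi_comp _ _ _ _ _ _ hu _ p.2.2)
            have h2 := descFun_fac V Vbar ι hQ s A (some p)
            simp only [splitCofan, cofan_mk_inj, sLeg, descLegs, Category.assoc] at h2 ⊢
            erw [← V.map_comp_assoc, ← op_comp, h1, h2]
            exact sinj_congr Vbar s _ (by rw [← Category.assoc, hw]) _ _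
        exact key.trans (Category.comp_id _).symm }

/-- The decomposition of the latching object, as a colimit cofan. -/
noncomputable def latchIsColimit :
    IsColimit (latchCofan V Vbar ι n) := by
  refine mkCofanColimit _ (fun s => colimit.desc _ (descCocone V Vbar ι hQ s)) ?_ ?_
  · intro s p
    simp only [latchCofan, cofan_mk_inj, Category.assoc, colimit.ι_desc]
    erw [Category.assoc, colimit.ι_desc]
    exact descFun_fac V Vbar ι hQ s (toLatchIndex p) none
  · intro s g hg
    show g = colimit.desc (latchDiagram V n) (descCocone V Vbar ι hQ s)
    refine colimit.hom_ext (F := latchDiagram V n) fun A => ?_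
    erw [colimit.ι_desc]
    show colimit.ι (latchDiagram V n) A ≫ g = descFun V Vbar ι hQ s A
    apply Cofan.IsColimit.hom_ext (hQ (objLen A) (objLen_lt A))
    rintro (_ | p)
    · have h2 := descFun_fac V Vbar ι hQ s A none
      simp only [sLeg, descLegs] at h2
      have h3 : ι (objLen A) ≫ colimit.ι (latchDiagram V n) A ≫ g = s.inj (push A none) := by
        exact (Category.assoc _ _ _).symm.trans (hg (push A none))
      simp only [splitCofan, cofan_mk_inj, sLeg, Category.assoc]
      erw [h3, h2]
    · have h2 := descFun_fac V Vbar ι hQ s A (some p)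
      simp only [sLeg, descLegs] at h2
      have h3 : ι (p.1 : ℕ) ≫ colimit.ι (latchDiagram V n) (toLatchIndex (push A (some p))) ≫ g
          = s.inj (push A (some p)) := by
        exact (Category.assoc _ _ _).symm.trans (hg (push A (some p)))
      have h4 : V.map p.2.1.op ≫ colimit.ι (latchDiagram V n) A ≫ g
          = colimit.ι (latchDiagram V n) (toLatchIndex (push A (some p))) ≫ g := by
        erw [← Category.assoc, map_comp_ι]
        rfl
      simp only [splitCofan, cofan_mk_inj, sLeg, Category.assoc]
      erw [Category.assoc, h4, h3]
      exact h2.symm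

end Aux

/-- Let `V` be a CW object in a cocomplete pointed category with CW basis
`(V̄_n)`: each `V_n` is the coproduct of `V̄_n` and the latching object `L_n V` (via the basis
inclusion `ι_n` and the canonical map `L_n V → V_n`), and the face maps `d_i` vanish on
`V̄_n` for `1 ≤ i ≤ n`.  Then the `n`-th latching object decomposes as the coproduct
`L_n V ≅ ⨿_{0≤k<n} ⨿_{0≤i_1<…<i_{n-k-1}≤n-1} V̄_k` (indexed by the surjections `[n] ↠ [k]`),
where the summand indexed by `(k, θ)` includes into `V_n` via the corresponding iterated
degeneracy restricted to `V̄_k`. -/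
theorem latching_decomposition (V : CategoryTheory.SimplicialObject M)
    (Vbar : ℕ → M) (ι : ∀ m : ℕ, Vbar m ⟶ V _⦋m⦌)
    (hcw : ∀ m : ℕ, Nonempty (IsColimit (BinaryCofan.mk (ι m) (latchCanon V m))))
    (hface : ∀ (m : ℕ) (i : Fin (m + 2)), i ≠ 0 → ι (m + 1) ≫ V.δ i = 0)
    (n : ℕ) :
    IsIso (decompMap V Vbar ι n) := by
  have key : ∀ n : ℕ, Nonempty (IsColimit (latchCofan V Vbar ι n)) := by
    intro n
    induction n using Nat.strong_induction_on with
    | _ n IH =>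
      exact ⟨latchIsColimit V Vbar ι fun m hm =>
        splitIsColimit V Vbar ι m (hcw m).some (IH m hm).some⟩
  obtain ⟨hl⟩ := key n
  have heq : decompMap V Vbar ι n
      = ((colimit.isColimit (Discrete.functor fun p : DecompIndex n =>
          Vbar (p.1 : ℕ))).coconePointUniqueUpToIso hl).hom := by
    apply Sigma.hom_ext
    intro p
    rw [show Sigma.ι (fun p : DecompIndex n => Vbar (p.1 : ℕ)) p
          = (colimit.cocone (Discrete.functor fun p : DecompIndex n => Vbar (p.1 : ℕ))).ι.app ⟨p⟩
        from rfl]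
    erw [IsColimit.comp_coconePointUniqueUpToIso_hom]
  rw [heq]
  exact Iso.isIso_hom _

end Stmt4
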